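/- Let L_τ > 1 and let τ: [0, 2π] → [0, 2π] be a strictly increasing bijection with τ(0)=0, τ(2π)=2π that is bi-Lipschitz with constant L_τ (i.e., L_τ⁻¹|θ−θ′| ≤ |τ(θ)−τ(θ′)| ≤ L_τ|θ−θ′|). Define R: 𝔻² → 𝔻² in polar coordinates by R(ζ) = (‖ζ‖₂ sin τ(ϑ(ζ)), ‖ζ‖₂ cos τ(ϑ(ζ))) for ζ ≠ 0 and R(0) = 0, where ϑ(ζ) ∈ [0,2π) is the angle of ζ. Then R is a Lipschitz map: there exists C ∈ (0,∞) such that ‖R(ζ) − R(ζ′)‖₂ ≤ C‖ζ − ζ′‖₂ for all ζ, ζ′ ∈ 𝔻². -/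

import Mathlib

noncomputable section
open Real
open scoped Classical

abbrev E2 := EuclideanSpace ℝ (Fin 2)

def pt (a b : ℝ) : E2 := (WithLp.equiv 2 (Fin 2 → ℝ)).symm ![a, b]

/-- The closed unit disk in the plane. -/
def Disk : Set E2 := Metric.closedBall 0 1


lemma norm_sq_two (x : E2) : ‖x‖ ^ 2 = (x 0) ^ 2 + (x 1) ^ 2 := by
  rw [EuclideanSpace.norm_eq, Real.sq_sqrt (by positivity)]
  simp [Fin.sum_univ_two, sq_abs]

lemma polar_dist_sq (r r' θ θ' : ℝ) :
    (r * sin θ - r' * sin θ') ^ 2 + (r * cos θ - r' * cos θ') ^ 2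
      = (r - r') ^ 2 + 4 * r * r' * sin ((θ - θ') / 2) ^ 2 := by
  have h1 : cos (θ - θ') = 1 - 2 * sin ((θ - θ') / 2) ^ 2 := by
    have := Real.sin_sq_eq_half_sub ((θ - θ') / 2)
    rw [show 2 * ((θ - θ') / 2) = θ - θ' by ring] at this
    linarith
  have h2 := Real.cos_sub θ θ'
  have h3 := Real.sin_sq_add_cos_sq θ
  have h4 := Real.sin_sq_add_cos_sq θ'
  linear_combination r ^ 2 * h3 + r' ^ 2 * h4 + 2 * r * r' * h2 - 2 * r * r' * h1

lemma sin_half_sq_abs (x : ℝ) : sin (|x| / 2) ^ 2 = sin (x / 2) ^ 2 := by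
  rcases abs_cases x with ⟨h, _⟩ | ⟨h, _⟩
  · rw [h]
  · rw [h, show -x / 2 = -(x / 2) by ring, Real.sin_neg, neg_sq]

lemma key_sin (L a b : ℝ) (hL : 1 ≤ L) (ha0 : 0 ≤ a) (ha2 : a ≤ 2 * π)
    (hb0 : 0 ≤ b) (hb2 : b ≤ 2 * π) (h1 : b ≤ L * a)
    (h2 : 2 * π - b ≤ L * (2 * π - a)) :
    sin (b / 2) ≤ (L * π / 2) * sin (a / 2) := by
  have hπ := Real.pi_pos
  rcases le_or_gt a π with ha | ha
  · have hs : a / π ≤ sin (a / 2) := by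
      simpa using Real.mul_le_sin (x := a / 2) (by linarith) (by linarith)
    calc sin (b / 2) ≤ b / 2 := Real.sin_le (by linarith)
      _ ≤ L * a / 2 := by linarith
      _ = (L * π / 2) * (a / π) := by field_simp
      _ ≤ (L * π / 2) * sin (a / 2) :=
          mul_le_mul_of_nonneg_left hs (by positivity)
  · have hsb : sin (b / 2) = sin ((2 * π - b) / 2) := by
      rw [show b / 2 = π - (2 * π - b) / 2 by ring, Real.sin_pi_sub]
    have hsa : sin (a / 2) = sin ((2 * π - a) / 2) := by
      rw [show a / 2 = π - (2 * π - a) / 2 by ring, Real.sin_pi_sub]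
    have hs : (2 * π - a) / π ≤ sin ((2 * π - a) / 2) := by
      simpa using Real.mul_le_sin (x := (2 * π - a) / 2) (by linarith) (by linarith)
    calc sin (b / 2) = sin ((2 * π - b) / 2) := hsb
      _ ≤ (2 * π - b) / 2 := Real.sin_le (by linarith)
      _ ≤ L * (2 * π - a) / 2 := by linarith
      _ = (L * π / 2) * ((2 * π - a) / π) := by field_simp
      _ ≤ (L * π / 2) * sin ((2 * π - a) / 2) :=
          mul_le_mul_of_nonneg_left hs (by positivity)
      _ = (L * π / 2) * sin (a / 2) := by rw [hsa]

lemma norm_pt_polar (r x : ℝ) (hr : 0 ≤ r) : ‖pt (r * sin x) (r * cos x)‖ = r := by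
  have h : ‖pt (r * sin x) (r * cos x)‖ ^ 2 = r ^ 2 := by
    rw [norm_sq_two]
    have e0 : pt (r * sin x) (r * cos x) 0 = r * sin x := rfl
    have e1 : pt (r * sin x) (r * cos x) 1 = r * cos x := rfl
    rw [e0, e1]
    nlinarith [Real.sin_sq_add_cos_sq x]
  calc ‖pt (r * sin x) (r * cos x)‖
      = Real.sqrt (‖pt (r * sin x) (r * cos x)‖ ^ 2) :=
        (Real.sqrt_sq (norm_nonneg _)).symm
    _ = Real.sqrt (r ^ 2) := by rw [h]
    _ = r := Real.sqrt_sq hr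

set_option maxHeartbeats 1000000 in
theorem stmt_8 (Lτ : ℝ) (hLτ : 1 < Lτ) (τ : ℝ → ℝ)
    (hmono : StrictMonoOn τ (Set.Icc 0 (2 * π)))
    (hbij : Set.BijOn τ (Set.Icc 0 (2 * π)) (Set.Icc 0 (2 * π)))
    (hτ0 : τ 0 = 0) (hτ2π : τ (2 * π) = 2 * π)
    (hbiLip : ∀ θ ∈ Set.Icc 0 (2 * π), ∀ θ' ∈ Set.Icc 0 (2 * π),
      Lτ⁻¹ * |θ - θ'| ≤ |τ θ - τ θ'| ∧ |τ θ - τ θ'| ≤ Lτ * |θ - θ'|)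
    (ϑ : E2 → ℝ)
    (hϑ : ∀ ζ : E2, ζ ≠ 0 →
      ϑ ζ ∈ Set.Ico 0 (2 * π) ∧ ζ 0 = ‖ζ‖ * sin (ϑ ζ) ∧ ζ 1 = ‖ζ‖ * cos (ϑ ζ))
    (R : E2 → E2)
    (hR : ∀ ζ : E2, R ζ =
      if ζ = 0 then 0 else pt (‖ζ‖ * sin (τ (ϑ ζ))) (‖ζ‖ * cos (τ (ϑ ζ)))) :
    ∃ C > (0:ℝ), ∀ ζ ∈ Disk, ∀ ζ' ∈ Disk, ‖R ζ - R ζ'‖ ≤ C * ‖ζ - ζ'‖ := by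
  have hπ := Real.pi_pos
  set K : ℝ := Lτ * π / 2 with hK
  have hπ3 := Real.pi_gt_three
  have hK1 : 1 ≤ K := by rw [hK]; nlinarith
  refine ⟨K, by nlinarith, ?_⟩
  intro ζ _ ζ' _
  by_cases hζ : ζ = 0
  · by_cases hζ' : ζ' = 0
    · simp [hR, hζ, hζ']
    · obtain ⟨hmem, h0, h1⟩ := hϑ ζ' hζ'
      rw [hR ζ, hR ζ', if_pos hζ, if_neg hζ', hζ]
      rw [zero_sub, norm_neg, zero_sub, norm_neg]
      rw [norm_pt_polar _ _ (norm_nonneg ζ')]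
      nlinarith [norm_nonneg ζ']
  · by_cases hζ' : ζ' = 0
    · obtain ⟨hmem, h0, h1⟩ := hϑ ζ hζ
      rw [hR ζ, hR ζ', if_neg hζ, if_pos hζ', hζ']
      rw [sub_zero, sub_zero, norm_pt_polar _ _ (norm_nonneg ζ)]
      nlinarith [norm_nonneg ζ]
    · obtain ⟨hmemθ, hz0, hz1⟩ := hϑ ζ hζ
      obtain ⟨hmemθ', hz0', hz1'⟩ := hϑ ζ' hζ'
      set r := ‖ζ‖
      set r' := ‖ζ'‖
      set θ := ϑ ζ
      set θ' := ϑ ζ'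
      have hθI : θ ∈ Set.Icc 0 (2 * π) := Set.Ico_subset_Icc_self hmemθ
      have hθI' : θ' ∈ Set.Icc 0 (2 * π) := Set.Ico_subset_Icc_self hmemθ'
      have h2πI : (2 * π) ∈ Set.Icc 0 (2 * π) := ⟨by positivity, le_refl _⟩
      have h0I : (0 : ℝ) ∈ Set.Icc 0 (2 * π) := ⟨le_refl _, by positivity⟩
      have hτθ : τ θ ∈ Set.Icc 0 (2 * π) := hbij.mapsTo hθI
      have hτθ' : τ θ' ∈ Set.Icc 0 (2 * π) := hbij.mapsTo hθI'
      set a := |θ - θ'| with ha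
      set b := |τ θ - τ θ'| with hb
      have ha0 : 0 ≤ a := abs_nonneg _
      have hb0 : 0 ≤ b := abs_nonneg _
      have ha2 : a ≤ 2 * π := by
        rw [ha, abs_sub_le_iff]; constructor <;> linarith [hθI.1, hθI.2, hθI'.1, hθI'.2]
      have hb2 : b ≤ 2 * π := by
        rw [hb, abs_sub_le_iff]; constructor <;> linarith [hτθ.1, hτθ.2, hτθ'.1, hτθ'.2]
      have h1 : b ≤ Lτ * a := (hbiLip θ hθI θ' hθI').2
      have key : ∀ x ∈ Set.Icc 0 (2 * π), ∀ y ∈ Set.Icc 0 (2 * π), y ≤ x →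
          2 * π - |τ x - τ y| ≤ Lτ * (2 * π - |x - y|) := by
        intro x hx y hy hyx
        have hτx := hbij.mapsTo hx
        have hτy := hbij.mapsTo hy
        have hmA := (hbiLip (2 * π) h2πI x hx).2
        have hmB := (hbiLip y hy 0 h0I).2
        rw [hτ2π] at hmA
        rw [hτ0] at hmB
        rw [abs_of_nonneg (by linarith [hτx.2] : (0:ℝ) ≤ 2 * π - τ x)] at hmA
        rw [abs_of_nonneg (by linarith [hx.2] : (0:ℝ) ≤ 2 * π - x)] at hmA
        simp only [sub_zero] at hmB
        rw [abs_of_nonneg hτy.1, abs_of_nonneg hy.1] at hmB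
        have hτxy : τ y ≤ τ x := by
          rcases eq_or_lt_of_le hyx with h | h
          · rw [h]
          · exact (hmono hy hx h).le
        rw [abs_of_nonneg (by linarith : (0:ℝ) ≤ τ x - τ y),
          abs_of_nonneg (by linarith : (0:ℝ) ≤ x - y)]
        linarith
      have h2 : 2 * π - b ≤ Lτ * (2 * π - a) := by
        rcases le_total θ' θ with h | h
        · exact key θ hθI θ' hθI' h
        · have := key θ' hθI' θ hθI h
          rwa [abs_sub_comm (τ θ') (τ θ), abs_sub_comm θ' θ] at this
      have hkey : sin (b / 2) ≤ K * sin (a / 2) :=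
        key_sin Lτ a b hLτ.le ha0 ha2 hb0 hb2 h1 h2
      have hsb0 : 0 ≤ sin (b / 2) :=
        Real.sin_nonneg_of_nonneg_of_le_pi (by linarith) (by linarith)
      have hsa0 : 0 ≤ sin (a / 2) :=
        Real.sin_nonneg_of_nonneg_of_le_pi (by linarith) (by linarith)
      have hksq : sin (b / 2) ^ 2 ≤ K ^ 2 * sin (a / 2) ^ 2 := by nlinarith
      have hRn : ‖R ζ - R ζ'‖ ^ 2
          = (r - r') ^ 2 + 4 * r * r' * sin (b / 2) ^ 2 := by
        rw [hR ζ, hR ζ', if_neg hζ, if_neg hζ', norm_sq_two]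
        have e0 : (pt (r * sin (τ θ)) (r * cos (τ θ))
            - pt (r' * sin (τ θ')) (r' * cos (τ θ'))) 0
            = r * sin (τ θ) - r' * sin (τ θ') := rfl
        have e1 : (pt (r * sin (τ θ)) (r * cos (τ θ))
            - pt (r' * sin (τ θ')) (r' * cos (τ θ'))) 1
            = r * cos (τ θ) - r' * cos (τ θ') := rfl
        rw [e0, e1, polar_dist_sq, hb, sin_half_sq_abs]
      have hzn : ‖ζ - ζ'‖ ^ 2
          = (r - r') ^ 2 + 4 * r * r' * sin (a / 2) ^ 2 := by
        rw [norm_sq_two]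
        have e0 : (ζ - ζ') 0 = ζ 0 - ζ' 0 := rfl
        have e1 : (ζ - ζ') 1 = ζ 1 - ζ' 1 := rfl
        rw [e0, e1, hz0, hz1, hz0', hz1', polar_dist_sq, ha, sin_half_sq_abs]
      have hr0 : 0 ≤ r := norm_nonneg _
      have hr0' : 0 ≤ r' := norm_nonneg _
      clear_value K r r' θ θ' a b
      have hsq : ‖R ζ - R ζ'‖ ^ 2 ≤ (K * ‖ζ - ζ'‖) ^ 2 := by
        rw [hRn, show (K * ‖ζ - ζ'‖) ^ 2 = K ^ 2 * ‖ζ - ζ'‖ ^ 2 by ring, hzn]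
        have hrr : 0 ≤ r * r' := mul_nonneg hr0 hr0'
        have t1 : 4 * r * r' * sin (b / 2) ^ 2 ≤ 4 * r * r' * (K ^ 2 * sin (a / 2) ^ 2) := by
          have h4 : (0:ℝ) ≤ 4 * (r * r') := by linarith
          nlinarith [mul_le_mul_of_nonneg_left hksq h4]
        have hKK : 1 ≤ K ^ 2 := by nlinarith
        have t2 : (r - r') ^ 2 ≤ K ^ 2 * (r - r') ^ 2 := by
          nlinarith [mul_le_mul_of_nonneg_right hKK (sq_nonneg (r - r'))]
        nlinarith [t1, t2]
      calc ‖R ζ - R ζ'‖ = Real.sqrt (‖R ζ - R ζ'‖ ^ 2) :=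
            (Real.sqrt_sq (norm_nonneg _)).symm
        _ ≤ Real.sqrt ((K * ‖ζ - ζ'‖) ^ 2) := Real.sqrt_le_sqrt hsq
        _ = K * ‖ζ - ζ'‖ := Real.sqrt_sq (by positivity)
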